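/- Let S ⊆ ℤ^n be a finite set whose convex hull P = conv(S) is full-dimensional (its affine hull is all of ℝ^n). If p is a polynomial with rational coefficients such that p(k) = #(ℤ^n ∩ k·P) for all positive integers k, then the coefficient of the degree-n term of p equals the Lebesgue volume of P. -/

import Mathlib

open Filter Polynomial Topology MeasureTheory Metric Set
open scoped Pointwise ENNReal


private lemma poly_div_pow_tendsto (q : Polynomial ℝ) (n : ℕ) (hd : q.natDegree ≤ n) :
    Tendsto (fun x : ℝ => q.eval x / x ^ n) atTop (𝓝 (q.coeff n)) := by
  have hev : ∀ x : ℝ, q.eval x = ∑ i ∈ Finset.range (n + 1), q.coeff i * x ^ i := fun x =>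
    q.eval_eq_sum_range' (Nat.lt_succ_of_le hd) x
  have key : Tendsto (fun x : ℝ => ∑ i ∈ Finset.range (n + 1), q.coeff i * (x ^ i / x ^ n)) atTop
      (𝓝 (∑ i ∈ Finset.range (n + 1), if i = n then q.coeff n else 0)) := by
    apply tendsto_finset_sum
    intro i hi
    rcases eq_or_lt_of_le (Nat.lt_succ_iff.mp (Finset.mem_range.mp hi)) with h | h
    · subst h
      simp only [if_pos rfl]
      have h1 : ∀ᶠ x : ℝ in atTop, q.coeff i * (x ^ i / x ^ i) = q.coeff i := by
        filter_upwards [eventually_ge_atTop (1 : ℝ)] with x hx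
        rw [div_self (by positivity), mul_one]
      exact Tendsto.congr' (h1.mono fun x hx => hx.symm) tendsto_const_nhds
    · rw [if_neg h.ne]
      have h2 : Tendsto (fun x : ℝ => q.coeff i * (x ^ (n - i))⁻¹) atTop (𝓝 (q.coeff i * 0)) :=
        Tendsto.const_mul _ ((tendsto_pow_atTop (by omega)).inv_tendsto_atTop)
      rw [mul_zero] at h2
      apply Tendsto.congr' _ h2
      filter_upwards [eventually_ge_atTop (1 : ℝ)] with x hx
      have hx0 : (0:ℝ) < x := lt_of_lt_of_le one_pos hx
      congr 1
      rw [inv_eq_iff_eq_inv, inv_div, eq_div_iff (by positivity), ← pow_add]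
      congr 1
      omega
  rw [Finset.sum_ite_eq' (Finset.range (n + 1)) n (fun _ => q.coeff n),
    if_pos (Finset.mem_range.mpr n.lt_succ_self)] at key
  apply Tendsto.congr' _ key
  filter_upwards [eventually_ge_atTop (1 : ℝ)] with x hx
  rw [hev, Finset.sum_div]
  exact Finset.sum_congr rfl fun i _ => (mul_div_assoc _ _ _).symm

private lemma poly_coeff_eq_of_tendsto (q : Polynomial ℝ) (n : ℕ) (V : ℝ)
    (h : Tendsto (fun k : ℕ => q.eval (k : ℝ) / (k : ℝ) ^ n) atTop (𝓝 V)) :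
    q.coeff n = V := by
  by_cases hd : q.natDegree ≤ n
  · have h1 := (poly_div_pow_tendsto q n hd).comp (tendsto_natCast_atTop_atTop (R := ℝ))
    exact tendsto_nhds_unique h1 h
  · exfalso
    push_neg at hd
    have hq : q ≠ 0 := fun h0 => by simp [h0] at hd
    have hlead : q.coeff q.natDegree ≠ 0 := leadingCoeff_ne_zero.mpr hq
    have h1 : Tendsto (fun x : ℝ => |q.eval x / x ^ q.natDegree|) atTop
        (𝓝 |q.coeff q.natDegree|) :=
      (poly_div_pow_tendsto q q.natDegree le_rfl).abs
    have h2 : Tendsto (fun x : ℝ => |q.eval x / x ^ q.natDegree| * x ^ (q.natDegree - n))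
        atTop atTop :=
      h1.pos_mul_atTop (abs_pos.mpr hlead) (tendsto_pow_atTop (by omega))
    have h3 : Tendsto (fun x : ℝ => |q.eval x / x ^ n|) atTop atTop := by
      apply h2.congr'
      filter_upwards [eventually_ge_atTop (1 : ℝ)] with x hx
      have hx0 : (0:ℝ) < x := lt_of_lt_of_le one_pos hx
      have hsplit : x ^ q.natDegree = x ^ n * x ^ (q.natDegree - n) := by
        rw [← pow_add]; congr 1; omega
      rw [abs_div, abs_div, abs_of_pos (pow_pos hx0 _), abs_of_pos (pow_pos hx0 _), hsplit,
        ← div_div, div_mul_cancel₀ _ (pow_pos hx0 (q.natDegree - n)).ne']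
    have h4 := h3.comp (tendsto_natCast_atTop_atTop (R := ℝ))
    exact not_tendsto_atTop_of_tendsto_nhds h.abs h4
section counting

variable {n : ℕ}

private def intCast' (n : ℕ) (x : Fin n → ℤ) : Fin n → ℝ := fun i => (x i : ℝ)

private def cube (x : Fin n → ℤ) : Set (Fin n → ℝ) :=
  Set.univ.pi fun i => Set.Ico (x i : ℝ) (x i + 1)

private lemma cube_measurable (x : Fin n → ℤ) : MeasurableSet (cube x) :=
  MeasurableSet.univ_pi fun _ => measurableSet_Ico

private lemma volume_cube (x : Fin n → ℤ) : volume (cube x) = 1 := by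
  rw [cube, volume_pi_pi]
  simp

private lemma cube_disjoint : Pairwise (Function.onFun Disjoint (cube (n := n))) := by
  intro x x' hxx'
  rw [Function.onFun, Set.disjoint_left]
  rintro y hy hy'
  apply hxx'
  funext i
  have h1 := hy i (Set.mem_univ i)
  have h2 := hy' i (Set.mem_univ i)
  simp only [Set.mem_Ico] at h1 h2
  have e1 : ⌊y i⌋ = x i := Int.floor_eq_iff.mpr ⟨h1.1, h1.2⟩
  have e2 : ⌊y i⌋ = x' i := Int.floor_eq_iff.mpr ⟨h2.1, h2.2⟩
  rw [← e1, e2]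

private lemma mem_cube_floor (y : Fin n → ℝ) : y ∈ cube (fun i => ⌊y i⌋) := by
  intro i _
  exact ⟨Int.floor_le _, Int.lt_floor_add_one _⟩

private lemma dist_le_one_of_mem_cube {x : Fin n → ℤ} {y : Fin n → ℝ} (hy : y ∈ cube x) :
    dist (intCast' n x) y ≤ 1 := by
  rw [dist_pi_le_iff zero_le_one]
  intro i
  have h := hy i (Set.mem_univ i)
  simp only [Set.mem_Ico] at h
  rw [intCast', Real.dist_eq, abs_le]
  constructor <;> nlinarith [h.1, h.2]

private lemma finite_lattice_of_bounded {B : Set (Fin n → ℝ)} (hB : Bornology.IsBounded B) :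
    {x : Fin n → ℤ | intCast' n x ∈ B}.Finite := by
  obtain ⟨R, hR⟩ := hB.subset_closedBall 0
  apply Set.Finite.subset (Set.Finite.pi fun i : Fin n => Set.finite_Icc (⌈-R⌉) (⌊R⌋))
  intro x hx
  have h1 : ‖intCast' n x‖ ≤ R := by
    have := hR hx
    rwa [mem_closedBall, dist_zero_right] at this
  intro i _
  have h2 : |(x i : ℝ)| ≤ R := by
    calc |(x i : ℝ)| = ‖intCast' n x i‖ := rfl
    _ ≤ ‖intCast' n x‖ := norm_le_pi_norm _ i
    _ ≤ R := h1
  rw [abs_le] at h2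
  exact ⟨Int.ceil_le.mpr (by linarith [h2.1]), Int.le_floor.mpr h2.2⟩

private lemma volume_biUnion_cubes {A : Set (Fin n → ℤ)} (hA : A.Finite) :
    volume (⋃ x ∈ hA.toFinset, cube x) = (A.ncard : ℝ≥0∞) := by
  rw [measure_biUnion_finset (cube_disjoint.set_pairwise _) fun x _ => cube_measurable x]
  simp only [volume_cube, Finset.sum_const, nsmul_eq_mul, mul_one]
  rw [Set.ncard_eq_toFinset_card _ hA]

end counting

private lemma count_tendsto (n : ℕ) (P : Set (Fin n → ℝ)) (hPc : IsCompact P)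
    (hPconv : Convex ℝ P) :
    Tendsto (fun k : ℕ =>
      (Set.ncard {x : Fin n → ℤ | intCast' n x ∈ (k : ℝ) • P} : ℝ) / (k : ℝ) ^ n)
      atTop (𝓝 (volume P).toReal) := by
  set Ef : ℕ → Set (Fin n → ℝ) := fun j => {z | closedBall z (1 / ((j : ℝ) + 1)) ⊆ P} with hEf
  set A : ℕ → Set (Fin n → ℤ) := fun k => {x | intCast' n x ∈ (k : ℝ) • P} with hA
  have hAfin : ∀ k : ℕ, (A k).Finite := fun k =>
    finite_lattice_of_bounded (hPc.isBounded.smul₀ (k : ℝ))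
  have hvolP : volume P ≠ ⊤ := hPc.isBounded.measure_lt_top.ne
  have hfinrank : Module.finrank ℝ (Fin n → ℝ) = n := Module.finrank_fin_fun ℝ
  -- interior volume equals volume
  have hintvol : volume (interior P) = volume P := by
    refine le_antisymm (measure_mono interior_subset) ?_
    calc volume P ≤ volume (closure P) := measure_mono subset_closure
    _ = volume (interior P ∪ frontier P) := by rw [closure_eq_interior_union_frontier]
    _ ≤ volume (interior P) + volume (frontier P) := measure_union_le _ _
    _ = volume (interior P) := by rw [hPconv.addHaar_frontier volume, add_zero]
  -- monotone union
  have hmono : Monotone Ef := by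
    intro j j' hj z hz
    refine (closedBall_subset_closedBall ?_).trans hz
    apply one_div_le_one_div_of_le (by positivity)
    have : (j : ℝ) ≤ (j' : ℝ) := Nat.cast_le.mpr hj
    linarith
  have hunion : ⋃ j, Ef j = interior P := by
    apply subset_antisymm
    · refine Set.iUnion_subset fun j z hz => ?_
      exact mem_interior.mpr ⟨ball z (1 / ((j : ℝ) + 1)),
        (ball_subset_closedBall).trans hz, isOpen_ball, mem_ball_self (by positivity)⟩
    · intro z hz
      obtain ⟨ε, hε, hball⟩ := Metric.mem_nhds_iff.mp (mem_interior_iff_mem_nhds.mp hz)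
      obtain ⟨j, hj⟩ := exists_nat_one_div_lt hε
      exact Set.mem_iUnion.mpr ⟨j, (closedBall_subset_ball hj).trans hball⟩
  have hlowlim : Tendsto (fun j => (volume (Ef j)).toReal) atTop (𝓝 (volume P).toReal) := by
    have h1 := tendsto_measure_iUnion_atTop (μ := volume) hmono
    rw [hunion, hintvol] at h1
    exact (ENNReal.tendsto_toReal hvolP).comp h1
  have hlow' : Tendsto (fun k : ℕ => (volume (Ef (k - 1))).toReal) atTop
      (𝓝 (volume P).toReal) := hlowlim.comp (tendsto_sub_atTop_nat 1)
  have hup' : Tendsto (fun k : ℕ => (volume (cthickening (1 / (k : ℝ)) P)).toReal) atTop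
      (𝓝 (volume P).toReal) := by
    exact (ENNReal.tendsto_toReal hvolP).comp
      ((tendsto_measure_cthickening_of_isCompact hPc).comp
        tendsto_one_div_atTop_nhds_zero_nat)
  refine tendsto_of_tendsto_of_tendsto_of_le_of_le' hlow' hup' ?_ ?_
  · -- lower bound
    filter_upwards [eventually_ge_atTop 1] with k hk
    have hk0 : (0 : ℝ) < (k : ℝ) := by exact_mod_cast hk
    have hincl : (k : ℝ) • Ef (k - 1) ⊆ ⋃ x ∈ (hAfin k).toFinset, cube x := by
      rintro y ⟨z, hz, rfl⟩
      refine Set.mem_biUnion ((Set.Finite.mem_toFinset _).mpr ?_) (mem_cube_floor ((k : ℝ) • z))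
      show intCast' n (fun i => ⌊((k : ℝ) • z) i⌋) ∈ (k : ℝ) • P
      rw [Set.mem_smul_set_iff_inv_smul_mem₀ hk0.ne']
      apply hz
      rw [mem_closedBall]
      have hz' : z = (k : ℝ)⁻¹ • ((k : ℝ) • z) := (inv_smul_smul₀ hk0.ne' z).symm
      have hcast : ((k - 1 : ℕ) : ℝ) + 1 = (k : ℝ) := by
        have : k - 1 + 1 = k := Nat.sub_add_cancel hk
        exact_mod_cast congrArg (Nat.cast : ℕ → ℝ) this
      calc dist ((k : ℝ)⁻¹ • intCast' n (fun i => ⌊((k : ℝ) • z) i⌋)) z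
          = ‖(k : ℝ)⁻¹‖ * dist (intCast' n (fun i => ⌊((k : ℝ) • z) i⌋)) ((k : ℝ) • z) := by
            rw [hz']; rw [← hz']; nth_rewrite 2 [hz']; exact dist_smul₀ _ _ _
        _ ≤ (k : ℝ)⁻¹ * 1 := by
            rw [norm_inv, Real.norm_eq_abs, abs_of_pos hk0]
            exact mul_le_mul le_rfl (dist_le_one_of_mem_cube (mem_cube_floor _))
              dist_nonneg (by positivity)
        _ = 1 / (((k - 1 : ℕ) : ℝ) + 1) := by rw [hcast, mul_one, one_div]
    have hvol : ENNReal.ofReal ((k : ℝ) ^ n) * volume (Ef (k - 1)) ≤ (Set.ncard (A k) : ℝ≥0∞) := by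
      rw [← volume_biUnion_cubes (hAfin k)]
      calc ENNReal.ofReal ((k : ℝ) ^ n) * volume (Ef (k - 1))
          = volume ((k : ℝ) • Ef (k - 1)) := by
            rw [Measure.addHaar_smul, hfinrank, abs_of_pos (by positivity)]
        _ ≤ volume (⋃ x ∈ (hAfin k).toFinset, cube x) := measure_mono hincl
    have := ENNReal.toReal_mono (ENNReal.natCast_ne_top _) hvol
    rw [ENNReal.toReal_mul, ENNReal.toReal_ofReal (by positivity), ENNReal.toReal_natCast] at this
    show _ ≤ (Set.ncard (A k) : ℝ) / (k:ℝ)^n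
    rw [le_div_iff₀ (by positivity)]
    linarith [this]
  · -- upper bound
    filter_upwards [eventually_ge_atTop 1] with k hk
    have hk0 : (0 : ℝ) < (k : ℝ) := by exact_mod_cast hk
    have hincl : (⋃ x ∈ (hAfin k).toFinset, cube x) ⊆ (k : ℝ) • cthickening (1 / (k : ℝ)) P := by
      intro y hy
      obtain ⟨x, hx, hcube⟩ := Set.mem_iUnion₂.mp hy
      rw [Set.Finite.mem_toFinset] at hx
      have hxP : (k : ℝ)⁻¹ • intCast' n x ∈ P :=
        (Set.mem_smul_set_iff_inv_smul_mem₀ hk0.ne' _ _).mp hx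
      rw [Set.mem_smul_set_iff_inv_smul_mem₀ hk0.ne']
      apply mem_cthickening_of_dist_le _ _ _ _ hxP
      calc dist ((k : ℝ)⁻¹ • y) ((k : ℝ)⁻¹ • intCast' n x)
          = ‖(k : ℝ)⁻¹‖ * dist y (intCast' n x) := dist_smul₀ _ _ _
        _ ≤ (k : ℝ)⁻¹ * 1 := by
            rw [norm_inv, Real.norm_eq_abs, abs_of_pos hk0]
            exact mul_le_mul le_rfl (dist_comm y _ ▸ dist_le_one_of_mem_cube hcube)
              dist_nonneg (by positivity)
        _ = 1 / (k : ℝ) := by rw [mul_one, one_div]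
    have hvol : (Set.ncard (A k) : ℝ≥0∞) ≤
        ENNReal.ofReal ((k : ℝ) ^ n) * volume (cthickening (1 / (k : ℝ)) P) := by
      rw [← volume_biUnion_cubes (hAfin k)]
      calc volume (⋃ x ∈ (hAfin k).toFinset, cube x)
          ≤ volume ((k : ℝ) • cthickening (1 / (k : ℝ)) P) := measure_mono hincl
        _ = ENNReal.ofReal ((k : ℝ) ^ n) * volume (cthickening (1 / (k : ℝ)) P) := by
            rw [Measure.addHaar_smul, hfinrank, abs_of_pos (by positivity)]
    have hfin : ENNReal.ofReal ((k : ℝ) ^ n) * volume (cthickening (1 / (k : ℝ)) P) ≠ ⊤ :=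
      ENNReal.mul_ne_top ENNReal.ofReal_ne_top hPc.isBounded.cthickening.measure_lt_top.ne
    have := ENNReal.toReal_mono hfin hvol
    rw [ENNReal.toReal_mul, ENNReal.toReal_ofReal (by positivity), ENNReal.toReal_natCast] at this
    show (Set.ncard (A k) : ℝ) / (k:ℝ)^n ≤ _
    rw [div_le_iff₀ (by positivity)]
    linarith [this]

/-- The leading coefficient (the coefficient of degree `n`) of the Ehrhart polynomial of a
full-dimensional integral polytope in `ℝ^n` equals its Lebesgue volume. -/
theorem ehrhart_polynomial_leading_coeff_eq_volume
    (n : ℕ) (S : Finset (Fin n → ℤ))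
    (P : Set (Fin n → ℝ))
    (hP : P = convexHull ℝ ((fun y : Fin n → ℤ => fun i => (y i : ℝ)) '' ↑S))
    (hfull : affineSpan ℝ P = ⊤)
    (p : Polynomial ℚ)
    (hp : ∀ k : ℕ, 0 < k →
      p.eval (k : ℚ) =
        (Set.ncard {x : Fin n → ℤ | (fun i => (x i : ℝ)) ∈ (k : ℝ) • P} : ℚ)) :
    ((p.coeff n : ℚ) : ℝ) = (MeasureTheory.volume P).toReal := by
  have hPc : IsCompact P := by
    rw [hP]
    exact Set.Finite.isCompact_convexHull ℝ ((S.finite_toSet).image _)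
  have hPconv : Convex ℝ P := hP ▸ convex_convexHull ℝ _
  set q : Polynomial ℝ := p.map (algebraMap ℚ ℝ) with hq
  have hcount := count_tendsto n P hPc hPconv
  have heval : Tendsto (fun k : ℕ => q.eval ((k : ℕ) : ℝ) / ((k : ℕ) : ℝ) ^ n) atTop
      (𝓝 (volume P).toReal) := by
    apply hcount.congr'
    filter_upwards [eventually_ge_atTop 1] with k hk
    congr 1
    have h1 : ((k : ℕ) : ℝ) = algebraMap ℚ ℝ ((k : ℕ) : ℚ) := by simp
    rw [h1, hq, Polynomial.eval_map, Polynomial.eval₂_at_apply, hp k hk]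
    simp
    rfl
  have hcoeff : q.coeff n = (volume P).toReal := poly_coeff_eq_of_tendsto q n _ heval
  rw [← hcoeff, hq, Polynomial.coeff_map]
  simp
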